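/- The singular values of the n×n lower triangular matrix of all ones are σ_s = (2 - 2cos((s+1/2)π/(n+1/2)))^{-1/2} for s = 0,...,n-1. -/

import Mathlib

open Polynomial Real Matrix

namespace Stmt0Aux

noncomputable def B (n : ℕ) : Matrix (Fin n) (Fin n) ℝ := fun i j =>
  (if i = j then 1 else 0) - (if (i : ℕ) = (j : ℕ) + 1 then 1 else 0)

lemma BL_eq_one {n : ℕ} (L : Matrix (Fin n) (Fin n) ℝ)
    (hL : ∀ i j, L i j = if j ≤ i then 1 else 0) : B n * L = 1 := by
  ext i j
  rw [Matrix.mul_apply]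
  simp only [B, sub_mul, one_mul, zero_mul, ite_mul, Finset.sum_sub_distrib]
  rw [Finset.sum_ite_eq Finset.univ i (fun k => L k j)]
  simp only [Finset.mem_univ, if_true]
  rcases Nat.eq_zero_or_pos (i : ℕ) with h0 | h0
  · rw [Finset.sum_eq_zero (fun k _ => by rw [if_neg]; omega)]
    rw [hL i j, Matrix.one_apply]
    simp only [Fin.le_def, Fin.ext_iff]
    split_ifs <;> first | rfl | omega | (exfalso; omega) | ring
  · rw [Finset.sum_eq_single_of_mem (⟨(i : ℕ) - 1, by omega⟩ : Fin n) (Finset.mem_univ _)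
      (fun k _ hk => by rw [if_neg]; intro h; apply hk; apply Fin.ext; simp; omega)]
    rw [if_pos (by simp; omega)]
    rw [hL i j, hL _ j, Matrix.one_apply]
    simp only [Fin.le_def, Fin.ext_iff]
    split_ifs <;> first | rfl | omega | (exfalso; omega) | ring

noncomputable def vN (t : ℝ) (k : ℕ) : ℝ := Real.cos (((k : ℝ) + 1/2) * t)

lemma Bt_mulVec {n : ℕ} (t : ℝ) (hvn : vN t n = 0) :
    (B n)ᵀ.mulVec (fun k : Fin n => vN t k) =
      fun k : Fin n => vN t k - vN t ((k : ℕ) + 1) := by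
  funext k
  rw [Matrix.mulVec, dotProduct]
  simp only [Matrix.transpose_apply, B, sub_mul, one_mul, zero_mul, ite_mul,
    Finset.sum_sub_distrib]
  rw [Finset.sum_ite_eq' Finset.univ k (fun j : Fin n => vN t j)]
  simp only [Finset.mem_univ, if_true]
  congr 1
  rcases Nat.lt_or_ge ((k : ℕ) + 1) n with h | h
  · rw [Finset.sum_eq_single_of_mem (⟨(k : ℕ) + 1, h⟩ : Fin n) (Finset.mem_univ _)
      (fun b _ hb => by rw [if_neg]; intro hh; apply hb; apply Fin.ext; simp; omega)]
    rw [if_pos (by simp)]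
  · rw [Finset.sum_eq_zero (fun b _ => by rw [if_neg]; have := b.isLt; omega)]
    have : (k : ℕ) + 1 = n := by have := k.isLt; omega
    rw [this, hvn]

lemma B_mulVec_w {n : ℕ} (t μ : ℝ)
    (h0 : vN t 0 - vN t 1 = μ * vN t 0)
    (hrec : ∀ m : ℕ, vN t m + vN t (m + 2) = (2 - μ) * vN t (m + 1)) :
    (B n).mulVec (fun k : Fin n => vN t k - vN t ((k : ℕ) + 1)) =
      μ • (fun k : Fin n => vN t k) := by
  funext i
  rw [Matrix.mulVec, dotProduct]
  simp only [B, sub_mul, one_mul, zero_mul, ite_mul, Finset.sum_sub_distrib]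
  rw [Finset.sum_ite_eq Finset.univ i (fun k : Fin n => vN t k - vN t ((k : ℕ) + 1))]
  simp only [Finset.mem_univ, if_true, Pi.smul_apply, smul_eq_mul]
  rcases Nat.eq_zero_or_pos (i : ℕ) with hi0 | hi0
  · rw [Finset.sum_eq_zero (fun b _ => by rw [if_neg]; omega)]
    rw [hi0]
    simpa using h0
  · rw [Finset.sum_eq_single_of_mem (⟨(i : ℕ) - 1, by omega⟩ : Fin n) (Finset.mem_univ _)
      (fun b _ hb => by rw [if_neg]; intro hh; apply hb; apply Fin.ext; simp; omega)]
    rw [if_pos (by simp; omega)]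
    have hm := hrec ((i : ℕ) - 1)
    have e1 : (i : ℕ) - 1 + 1 = (i : ℕ) := by omega
    have e2 : (i : ℕ) - 1 + 2 = (i : ℕ) + 1 := by omega
    rw [e1, e2] at hm
    simp only [e1]
    linarith [hm]

lemma trig_h0 (t : ℝ) : vN t 0 - vN t 1 = (2 - 2 * Real.cos t) * vN t 0 := by
  have e0 : (((0 : ℕ) : ℝ) + 1/2) * t = t/2 := by push_cast; ring
  have e1 : (((1 : ℕ) : ℝ) + 1/2) * t = 3 * (t/2) := by push_cast; ring
  have e2 : t = 2 * (t/2) := by ring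
  rw [vN, vN, e0, e1]
  nth_rewrite 3 [e2]
  rw [Real.cos_three_mul, Real.cos_two_mul]
  ring

lemma trig_hrec (t : ℝ) (m : ℕ) :
    vN t m + vN t (m + 2) = (2 - (2 - 2 * Real.cos t)) * vN t (m + 1) := by
  have e0 : (((m : ℕ) : ℝ) + 1/2) * t = (((m + 1 : ℕ) : ℝ) + 1/2) * t - t := by
    push_cast; ring
  have e2 : (((m + 2 : ℕ) : ℝ) + 1/2) * t = (((m + 1 : ℕ) : ℝ) + 1/2) * t + t := by
    push_cast; ring
  rw [vN, vN, vN, e0, e2, Real.cos_sub, Real.cos_add]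
  ring

lemma trig_hvn (n : ℕ) (s : Fin n) :
    vN ((((s : ℕ) : ℝ) + 1/2) * Real.pi / (((n : ℕ) : ℝ) + 1/2)) n = 0 := by
  have hn : ((n : ℝ) + 1/2) ≠ 0 := by positivity
  rw [vN]
  have : ((n : ℝ) + 1/2) * ((((s : ℕ) : ℝ) + 1/2) * Real.pi / ((n : ℝ) + 1/2))
      = (s : ℕ) * Real.pi + Real.pi / 2 := by field_simp
  rw [this, Real.cos_add, Real.cos_pi_div_two, Real.sin_pi_div_two,
    Real.sin_nat_mul_pi]
  ring

lemma charpoly_eval' {n : ℕ} (M : Matrix (Fin n) (Fin n) ℝ) (r : ℝ) :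
    M.charpoly.eval r = (r • (1 : Matrix (Fin n) (Fin n) ℝ) - M).det := by
  rw [Matrix.charpoly, eval_det, matPolyEquiv_charmatrix]
  congr 1
  simp only [eval_sub, eval_X, eval_C]
  congr 1
  rw [Matrix.scalar_apply, Matrix.smul_one_eq_diagonal]

lemma root_of_eigen {n : ℕ} (M : Matrix (Fin n) (Fin n) ℝ) (r : ℝ) (v : Fin n → ℝ)
    (hv : v ≠ 0) (h : M.mulVec v = r • v) : M.charpoly.IsRoot r := by
  rw [Polynomial.IsRoot, charpoly_eval', ← Matrix.exists_mulVec_eq_zero_iff]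
  exact ⟨v, hv, by
    rw [Matrix.sub_mulVec, h, Matrix.smul_mulVec, Matrix.one_mulVec]; simp⟩

end Stmt0Aux

open Stmt0Aux in
/-- The singular values of the n×n lower triangular matrix of all ones are
`σ_s = (2 - 2cos((s+1/2)π/(n+1/2)))^{-1/2}` for `s = 0,…,n-1`; formalized as:
the eigenvalues of `LᵀL` (whose square roots are the singular values of `L`)
are exactly the `σ_s²`, i.e. the characteristic polynomial of `LᵀL` splits as
`∏ₛ (X - σ_s²)`. -/
theorem stmt0 (n : ℕ) (L : Matrix (Fin n) (Fin n) ℝ)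
    (hL : ∀ i j, L i j = if j ≤ i then 1 else 0) :
    (Lᵀ * L).charpoly =
      ∏ s : Fin n,
        (X - C (((2 - 2 * Real.cos ((((s : ℝ) + 1/2)) * π / ((n : ℝ) + 1/2)))
            ^ (-(1/2) : ℝ)) ^ 2)) := by
  classical
  set t : Fin n → ℝ := fun s => (((s : ℕ) : ℝ) + 1/2) * π / (((n : ℕ) : ℝ) + 1/2) with ht
  set μ : Fin n → ℝ := fun s => 2 - 2 * Real.cos (t s) with hμdef
  set M : Matrix (Fin n) (Fin n) ℝ := Lᵀ * L with hM
  have hBL : B n * L = 1 := BL_eq_one L hL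
  have hLB : L * B n = 1 := mul_eq_one_comm.mp hBL
  have hMT : M * (B n * (B n)ᵀ) = 1 := by
    rw [hM, Matrix.mul_assoc, ← Matrix.mul_assoc L, hLB, Matrix.one_mul,
      ← Matrix.transpose_mul, hBL, Matrix.transpose_one]
  -- bounds on angles
  have htpos : ∀ s : Fin n, 0 < t s := by
    intro s
    apply div_pos (mul_pos (by positivity) Real.pi_pos) (by positivity)
  have htlt : ∀ s : Fin n, t s < π := by
    intro s
    rw [ht, div_lt_iff₀ (by positivity)]
    have hs : ((s : ℕ) : ℝ) + 1/2 < ((n : ℕ) : ℝ) + 1/2 := by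
      have := s.isLt
      have : ((s : ℕ) : ℝ) < ((n : ℕ) : ℝ) := by exact_mod_cast this
      linarith
    nlinarith [Real.pi_pos]
  have hμpos : ∀ s : Fin n, 0 < μ s := by
    intro s
    have h1 : Real.cos (t s) < Real.cos 0 :=
      Real.cos_lt_cos_of_nonneg_of_le_pi le_rfl (htlt s).le (htpos s)
    rw [Real.cos_zero] at h1
    simp only [hμdef]
    linarith
  -- eigenvectors
  set v : Fin n → Fin n → ℝ := fun s k => vN (t s) (k : ℕ) with hv
  have hTv : ∀ s : Fin n, (B n * (B n)ᵀ).mulVec (v s) = μ s • v s := by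
    intro s
    rw [← Matrix.mulVec_mulVec, hv]
    rw [Bt_mulVec (t s) (trig_hvn n s)]
    exact B_mulVec_w (t s) (μ s) (trig_h0 _) (fun m => trig_hrec _ m)
  have hMv : ∀ s : Fin n, M.mulVec (v s) = (μ s)⁻¹ • v s := by
    intro s
    have h1 : M.mulVec ((B n * (B n)ᵀ).mulVec (v s)) = v s := by
      rw [Matrix.mulVec_mulVec, hMT, Matrix.one_mulVec]
    rw [hTv s, Matrix.mulVec_smul] at h1
    have := congrArg (fun w => (μ s)⁻¹ • w) h1
    simpa [smul_smul, inv_mul_cancel₀ (hμpos s).ne'] using this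
  have hvne : ∀ s : Fin n, v s ≠ 0 := by
    intro s hcon
    have h0 := congrFun hcon ⟨0, s.pos⟩
    simp only [hv, Pi.zero_apply] at h0
    have hpos : 0 < vN (t s) ((⟨0, s.pos⟩ : Fin n) : ℕ) := by
      rw [vN]
      have harg : ((((⟨0, s.pos⟩ : Fin n) : ℕ) : ℝ) + 1/2) * t s = t s / 2 := by
        push_cast; ring
      rw [harg]
      apply Real.cos_pos_of_mem_Ioo
      constructor
      · have := htpos s; linarith [Real.pi_pos]
      · have := htlt s; linarith
    linarith
  -- each (μ s)⁻¹ is a root of the charpoly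
  have hroot : ∀ s : Fin n, M.charpoly.IsRoot ((μ s)⁻¹) := fun s =>
    root_of_eigen M _ (v s) (hvne s) (hMv s)
  -- injectivity
  have hinj : Function.Injective (fun s : Fin n => (μ s)⁻¹) := by
    intro s1 s2 h
    simp only at h
    have hμeq : μ s1 = μ s2 := inv_inj.mp h
    have hcos : Real.cos (t s1) = Real.cos (t s2) := by
      simp only [hμdef] at hμeq; linarith
    have hteq : t s1 = t s2 :=
      Real.injOn_cos ⟨(htpos s1).le, (htlt s1).le⟩ ⟨(htpos s2).le, (htlt s2).le⟩ hcos
    simp only [ht] at hteq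
    have hc : (((n : ℕ) : ℝ) + 1/2) ≠ 0 := by positivity
    rw [div_eq_div_iff hc hc] at hteq
    have h2 := mul_right_cancel₀ hc hteq
    have h3 := mul_right_cancel₀ Real.pi_ne_zero h2
    have h4 : ((s1 : ℕ) : ℝ) = ((s2 : ℕ) : ℝ) := by linarith
    exact Fin.ext (by exact_mod_cast h4)
  -- assemble the polynomial identity
  set p : Polynomial ℝ := M.charpoly with hp
  have hmonic : p.Monic := M.charpoly_monic
  have hdeg : p.natDegree = n := by
    rw [hp, Matrix.charpoly_natDegree_eq_dim, Fintype.card_fin]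
  have hne : p ≠ 0 := hmonic.ne_zero
  set ms : Multiset ℝ := Finset.univ.val.map (fun s : Fin n => (μ s)⁻¹) with hms
  have hnodup : ms.Nodup := Multiset.Nodup.map hinj Finset.univ.nodup
  have hsub : ms ⊆ p.roots := by
    intro a ha
    rw [hms, Multiset.mem_map] at ha
    obtain ⟨s, _, rfl⟩ := ha
    rw [Polynomial.mem_roots hne]
    exact hroot s
  have hle : ms ≤ p.roots := (Multiset.le_iff_subset hnodup).2 hsub
  have hcardms : Multiset.card ms = n := by simp [hms]
  have hcardroots : Multiset.card p.roots ≤ n := hdeg ▸ p.card_roots'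
  have hroots : p.roots = ms :=
    (Multiset.eq_of_le_of_card_le hle (by rw [hcardms]; exact hcardroots)).symm
  have hsplits : p.Splits :=
    Polynomial.splits_iff_card_roots.mpr (by rw [hroots, hcardms, hdeg])
  have hfact := hsplits.eq_prod_roots_of_monic hmonic
  rw [hroots, hms, Multiset.map_map] at hfact
  have hRe : ∀ s : Fin n,
      ((2 - 2 * Real.cos ((((s : ℝ) + 1/2)) * π / ((n : ℝ) + 1/2)))
        ^ (-(1/2) : ℝ)) ^ 2 = (μ s)⁻¹ := by
    intro s
    have harg : (((s : ℝ) + 1/2)) * π / ((n : ℝ) + 1/2) = t s := by rw [ht]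
    rw [harg]
    have hx := (hμpos s).le
    rw [← Real.rpow_natCast ((μ s) ^ (-(1/2) : ℝ)) 2, ← Real.rpow_mul hx]
    norm_num
    rw [Real.rpow_neg_one]
  calc (Lᵀ * L).charpoly = p := rfl
    _ = (Finset.univ.val.map ((fun a => X - C a) ∘ fun s : Fin n => (μ s)⁻¹)).prod :=
        hfact
    _ = ∏ s : Fin n, (X - C ((μ s)⁻¹)) := rfl
    _ = _ := Finset.prod_congr rfl (fun s _ => by rw [hRe s])
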